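/- Let k ≥ 1 and let n, m be positive integers whose length-k parity vectors agree, i.e., T^{(i)}(n) ≡ T^{(i)}(m) (mod 2) for all 0 ≤ i < k. Let a = #{ i : 0 ≤ i < k and T^{(i)}(n) is odd }. Then, as integers, 2^k · (T^{(k)}(m) − T^{(k)}(n)) = 3^a · (m − n). In particular, on each residue class modulo 2^k, T^{(k)} is given by a single affine formula n ↦ (3^a n + r)/2^k with the exponent a and the constant r determined by the parity vector. -/
import Mathlib


/-- The Collatz map: `T n = (3n+1)/2` if `n` is odd, `n/2` if `n` is even. -/
def T (n : ℕ) : ℕ := if n % 2 = 1 then (3 * n + 1) / 2 else n / 2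

lemma Tstep (n m : ℕ) (h : n % 2 = m % 2) :
    (2 : ℤ) * ((T m : ℤ) - (T n : ℤ)) =
      (if n % 2 = 1 then (3 : ℤ) else 1) * ((m : ℤ) - (n : ℤ)) := by
  unfold T
  rcases Nat.mod_two_eq_zero_or_one n with h0 | h1
  · have hm0 : m % 2 = 0 := by omega
    rw [if_neg (by omega : ¬ n % 2 = 1), if_neg (by omega : ¬ n % 2 = 1),
        if_neg (by omega : ¬ m % 2 = 1)]
    omega
  · have hm1 : m % 2 = 1 := by omega
    rw [if_pos h1, if_pos h1, if_pos hm1]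
    omega

lemma aux (k : ℕ) (n m : ℕ)
    (hpar : ∀ i < k, T^[i] n % 2 = T^[i] m % 2) :
    (2 : ℤ) ^ k * ((T^[k] m : ℤ) - (T^[k] n : ℤ)) =
      (3 : ℤ) ^ ((Finset.range k).filter (fun i => T^[i] n % 2 = 1)).card *
        ((m : ℤ) - (n : ℤ)) := by
  induction k with
  | zero => simp
  | succ k ih =>
    have hih := ih (fun i hi => hpar i (by omega))
    have hstep := Tstep (T^[k] n) (T^[k] m) (hpar k (by omega))
    rw [Function.iterate_succ_apply', Function.iterate_succ_apply']
    rw [Finset.range_add_one, Finset.filter_insert]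
    by_cases hodd : T^[k] n % 2 = 1
    · rw [if_pos hodd, Finset.card_insert_of_notMem (by simp)]
      rw [if_pos hodd] at hstep
      rw [pow_succ, pow_succ]
      calc (2:ℤ)^k * 2 * ((T (T^[k] m) : ℤ) - (T (T^[k] n) : ℤ))
          = (2:ℤ)^k * (3 * ((T^[k] m : ℤ) - (T^[k] n : ℤ))) := by rw [mul_assoc, hstep]
        _ = 3 * ((2:ℤ)^k * ((T^[k] m : ℤ) - (T^[k] n : ℤ))) := by ring
        _ = _ := by rw [hih]; ring
    · rw [if_neg hodd]
      rw [if_neg hodd] at hstep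
      rw [pow_succ]
      calc (2:ℤ)^k * 2 * ((T (T^[k] m) : ℤ) - (T (T^[k] n) : ℤ))
          = (2:ℤ)^k * (1 * ((T^[k] m : ℤ) - (T^[k] n : ℤ))) := by rw [mul_assoc, hstep]
        _ = _ := by rw [one_mul, hih]

/-- If the length-`k` parity vectors of positive integers `n` and `m` agree, and
`a` is the number of odd iterates `T^[i] n` for `i < k`, then as integers
`2^k * (T^[k] m - T^[k] n) = 3^a * (m - n)`. -/
theorem stmt_3 (k : ℕ) (hk : 1 ≤ k) (n m : ℕ) (hn : 0 < n) (hm : 0 < m)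
    (hpar : ∀ i < k, T^[i] n % 2 = T^[i] m % 2) :
    (2 : ℤ) ^ k * ((T^[k] m : ℤ) - (T^[k] n : ℤ)) =
      (3 : ℤ) ^ ((Finset.range k).filter (fun i => T^[i] n % 2 = 1)).card *
        ((m : ℤ) - (n : ℤ)) := by
  exact aux k n m hpar
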